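/- Let b ∈ Kⁿ, B a ball around 0 in (Kⁿ,v) with the minimum valuation, and f : b+B → Kⁿ pseudo-linear with pseudo-slope s. Then f(b+B) ⊆ fb + sB, and f : b+B → fb+sB is an immediate injective embedding of ultrametric spaces with value map α ↦ α+vs. If moreover (K,v) is spherically complete, f is a bijection from b+B onto fb+sB. -/

import Mathlib

section Ultrametric

variable {Y Y' : Type*} {Γ Γ' : Type*} [LinearOrder Γ] [OrderTop Γ]
  [LinearOrder Γ'] [OrderTop Γ']

/-- The axioms of an ultrametric space with distance values in `Γ` (with top element `∞`). -/
def IsUltrametric (u : Y → Y → Γ) : Prop :=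
  (∀ y z, u y z = ⊤ ↔ y = z) ∧
  (∀ x y z, min (u y x) (u x z) ≤ u y z) ∧
  (∀ y z, u y z = u z y)

/-- The closed ball of radius `α` around `y`. -/
def closedBall (u : Y → Y → Γ) (α : Γ) (y : Y) : Set Y := {z | α ≤ u y z}

/-- `B(x,y)`, the smallest closed ball containing `x` and `y`. -/
def smallBall (u : Y → Y → Γ) (x y : Y) : Set Y := closedBall u (u x y) x

/-- A ball: a union of a nonempty collection of closed balls having a common element. -/
def IsBall (u : Y → Y → Γ) (S : Set Y) : Prop :=
  ∃ C : Set (Γ × Y), C.Nonempty ∧ (∃ y₀, ∀ p ∈ C, y₀ ∈ closedBall u p.1 p.2) ∧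
    S = ⋃ p ∈ C, closedBall u p.1 p.2

/-- Spherical completeness: every nest of balls has nonempty intersection. -/
def SphericallyComplete (u : Y → Y → Γ) : Prop :=
  ∀ N : Set (Set Y), N.Nonempty → (∀ B ∈ N, IsBall u B) →
    IsChain (· ⊆ ·) N → (⋂₀ N).Nonempty

/-- `z'` is an attractor for `f`. -/
def IsAttractor (u : Y → Y → Γ) (u' : Y' → Y' → Γ') (f : Y → Y') (z' : Y') : Prop :=
  ∀ y : Y, f y ≠ z' → ∃ z : Y,
    u' (f y) z' < u' (f z) z' ∧ f '' smallBall u y z ⊆ smallBall u' (f y) z'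

/-- A map is immediate if every element of the target is an attractor for it. -/
def Immediate (u : Y → Y → Γ) (u' : Y' → Y' → Γ') (f : Y → Y') : Prop :=
  ∀ z' : Y', IsAttractor u u' f z'

end Ultrametric

section sub
variable {Y Y' : Type*} {Γ Γ' : Type*} [LinearOrder Γ] [OrderTop Γ]
  [LinearOrder Γ'] [OrderTop Γ']

/-- The smallest ball of the subspace `S` containing `x` and `y`. -/
def smallBallIn (u : Y → Y → Γ) (S : Set Y) (x y : Y) : Set Y :=
  {z ∈ S | u x y ≤ u x z}

/-- `f`, viewed as a map from the ultrametric subspace `S` to the ultrametric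
subspace `S'`, is immediate: every `z' ∈ S'` is an attractor. -/
def ImmediateOn (u : Y → Y → Γ) (u' : Y' → Y' → Γ') (f : Y → Y')
    (S : Set Y) (S' : Set Y') : Prop :=
  ∀ z' ∈ S', ∀ y ∈ S, f y ≠ z' → ∃ z ∈ S,
    u' (f y) z' < u' (f z) z' ∧
      f '' smallBallIn u S y z ⊆ smallBallIn u' S' (f y) z'

end sub

/-- The axioms of a (Krull) valuation on a field, written additively, with
`v a = ⊤` iff `a = 0`. -/
def IsFieldVal {K : Type*} [Field K] {Γ : Type*} [AddCommGroup Γ] [LinearOrder Γ] [IsOrderedAddMonoid Γ]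
    (v : K → WithTop Γ) : Prop :=
  (∀ a, v a = ⊤ ↔ a = 0) ∧ (∀ a b, v (a * b) = v a + v b) ∧
  (∀ a b, min (v a) (v b) ≤ v (a - b))

/-- The minimum valuation on `Kⁿ`. -/
def minVal {K : Type*} [Field K] {Γ : Type*} [AddCommGroup Γ] [LinearOrder Γ] [IsOrderedAddMonoid Γ]
    (v : K → WithTop Γ) {n : ℕ} (x : Fin n → K) : WithTop Γ :=
  Finset.univ.inf fun i => v (x i)

namespace PLaux
variable {K : Type*} [Field K] {Γ : Type*} [AddCommGroup Γ] [LinearOrder Γ] [IsOrderedAddMonoid Γ]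
  {v : K → WithTop Γ} {n : ℕ}

lemma v_one (hv : IsFieldVal v) : v 1 = 0 := by
  have h := hv.2.1 1 1
  rw [one_mul] at h
  have h1 : v 1 ≠ ⊤ := by simp [hv.1]
  lift v 1 to Γ using h1 with g hg
  have h2 : g = g + g := by exact_mod_cast h
  have h3 : g = 0 := left_eq_add.mp h2
  exact_mod_cast h3

lemma v_neg (hv : IsFieldVal v) (a : K) : v (-a) = v a := by
  have hm1 : v (-1 : K) = 0 := by
    have h := hv.2.1 (-1 : K) (-1)
    rw [neg_mul_neg, one_mul, v_one hv] at h
    have h1 : v (-1 : K) ≠ ⊤ := by simp [hv.1]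
    lift v (-1 : K) to Γ using h1 with g hg
    have h2 : g + g = (0:Γ) := by exact_mod_cast h.symm
    have h3 : g = 0 := by
      by_contra hne
      rcases lt_or_gt_of_ne hne with hlt|hlt
      · exact absurd h2 (ne_of_lt (by simpa using add_lt_add hlt hlt))
      · exact absurd h2 (ne_of_gt (by simpa using add_lt_add hlt hlt))
    exact_mod_cast h3
  have h := hv.2.1 (-1 : K) a
  rwa [neg_one_mul, hm1, zero_add] at h

lemma v_min_le_add (hv : IsFieldVal v) (a b : K) : min (v a) (v b) ≤ v (a + b) := by
  have h := hv.2.2 a (-b)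
  rwa [sub_neg_eq_add, v_neg hv] at h

lemma mV_top_iff (hv : IsFieldVal v) (x : Fin n → K) : minVal v x = ⊤ ↔ x = 0 := by
  simp only [minVal, Finset.inf_eq_top_iff, Finset.mem_univ, forall_true_left, hv.1]
  constructor
  · intro h; funext i; exact h i
  · intro h i; rw [h]; simp [hv.1]

lemma mV_neg (hv : IsFieldVal v) (x : Fin n → K) : minVal v (-x) = minVal v x := by
  simp only [minVal, Pi.neg_apply, v_neg hv]

lemma mV_swap (hv : IsFieldVal v) (x y : Fin n → K) :
    minVal v (x - y) = minVal v (y - x) := by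
  rw [← mV_neg hv (y - x), neg_sub]

lemma mV_min_le_sub (hv : IsFieldVal v) (x y : Fin n → K) :
    min (minVal v x) (minVal v y) ≤ minVal v (x - y) := by
  apply Finset.le_inf
  intro i _
  refine le_trans (min_le_min ?_ ?_) (hv.2.2 (x i) (y i))
  · exact Finset.inf_le (Finset.mem_univ i)
  · exact Finset.inf_le (Finset.mem_univ i)

lemma mV_min_le_add (hv : IsFieldVal v) (x y : Fin n → K) :
    min (minVal v x) (minVal v y) ≤ minVal v (x + y) := by
  have h := mV_min_le_sub hv x (-y)
  rwa [sub_neg_eq_add, mV_neg hv] at h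

lemma mV_smul (hv : IsFieldVal v) (a : K) (x : Fin n → K) :
    minVal v (a • x) = v a + minVal v x := by
  classical
  have hmono : Monotone (fun t : WithTop Γ => v a + t) :=
    fun p q h => add_le_add_right h (v a)
  simp only [minVal, Pi.smul_apply, smul_eq_mul, hv.2.1]
  induction (Finset.univ : Finset (Fin n)) using Finset.induction with
  | empty => simp
  | insert _ _ h ih =>
      rw [Finset.inf_insert, Finset.inf_insert, ih]
      exact (hmono.map_min).symm

lemma mV_le_coord (x : Fin n → K) (i : Fin n) : minVal v x ≤ v (x i) :=
  Finset.inf_le (Finset.mem_univ i)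

/-- A ball containing `0` absorbs elements of larger minimum valuation. -/
lemma mem_ball_of_le (hv : IsFieldVal v) {B : Set (Fin n → K)}
    (hB : IsBall (fun x y : Fin n → K => minVal v (x - y)) B)
    (hB0 : (0 : Fin n → K) ∈ B) {w x : Fin n → K} (hw : w ∈ B)
    (h : minVal v w ≤ minVal v x) : x ∈ B := by
  obtain ⟨C, -, ⟨y₀, hy₀⟩, rfl⟩ := hB
  simp only [Set.mem_iUnion, closedBall, Set.mem_setOf_eq] at hB0 hw ⊢
  obtain ⟨p₀, hp₀C, hp₀⟩ := hB0
  obtain ⟨p, hpC, hp⟩ := hw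
  rw [sub_zero] at hp₀
  have hpy := hy₀ p hpC
  have hp₀y := hy₀ p₀ hp₀C
  simp only [closedBall, Set.mem_setOf_eq] at hpy hp₀y
  have hA : p₀.1 ≤ minVal v y₀ := by
    have h1 := mV_min_le_sub hv p₀.2 (p₀.2 - y₀)
    rw [sub_sub_cancel] at h1
    exact le_trans (le_min hp₀ hp₀y) h1
  have h2 : min p.1 p₀.1 ≤ minVal v p.2 := by
    have h1 := mV_min_le_add hv (p.2 - y₀) y₀
    rw [sub_add_cancel] at h1
    exact le_trans (min_le_min hpy hA) h1
  have h3 : min p.1 p₀.1 ≤ minVal v w := by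
    have h1 := mV_min_le_sub hv p.2 (p.2 - w)
    rw [sub_sub_cancel] at h1
    exact le_trans (le_min h2 (le_trans (min_le_left _ _) hp)) h1
  have h4 : min p.1 p₀.1 ≤ minVal v x := le_trans h3 h
  rcases le_total p.1 p₀.1 with hle | hle
  · refine ⟨p, hpC, ?_⟩
    have h1 := mV_min_le_sub hv p.2 x
    exact le_trans (le_min (le_trans (le_min le_rfl hle) h2)
      (le_trans (le_min le_rfl hle) h4)) h1
  · refine ⟨p₀, hp₀C, ?_⟩
    have h1 := mV_min_le_sub hv p₀.2 x
    exact le_trans (le_min hp₀ (le_trans (le_min hle le_rfl) h4)) h1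

end PLaux

/-- a pseudo-linear map with pseudo-slope `s` on `b + B` maps into
`f b + sB`, is an immediate injective embedding with value map `α ↦ α + vs`, and is a
bijection onto `f b + sB` if `(K,v)` is spherically complete. -/
theorem pseudoLinear_immediate {K : Type*} [Field K] {Γ : Type*}
    [AddCommGroup Γ] [LinearOrder Γ] [IsOrderedAddMonoid Γ] (v : K → WithTop Γ) (hv : IsFieldVal v)
    {n : ℕ} (b : Fin n → K) (B : Set (Fin n → K))
    (hB : IsBall (fun x y : Fin n → K => minVal v (x - y)) B) (hB0 : (0 : Fin n → K) ∈ B)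
    (s : K) (hs : s ≠ 0) (f : (Fin n → K) → (Fin n → K))
    (hpl : ∀ y ∈ (fun x => b + x) '' B, ∀ z ∈ (fun x => b + x) '' B, y ≠ z →
      minVal v (f y - f z) = v s + minVal v (y - z) ∧
        v s + minVal v (y - z) < minVal v (f y - f z - s • (y - z))) :
    Set.MapsTo f ((fun x => b + x) '' B) ((fun x => f b + x) '' ((fun x => s • x) '' B)) ∧
    ImmediateOn (fun x y : Fin n → K => minVal v (x - y))
      (fun x y : Fin n → K => minVal v (x - y)) f
      ((fun x => b + x) '' B) ((fun x => f b + x) '' ((fun x => s • x) '' B)) ∧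
    Set.InjOn f ((fun x => b + x) '' B) ∧
    (SphericallyComplete (fun a c : K => v (a - c)) →
      Set.BijOn f ((fun x => b + x) '' B)
        ((fun x => f b + x) '' ((fun x => s • x) '' B))) := by
  classical
  open PLaux in
  set S : Set (Fin n → K) := (fun x => b + x) '' B with hS_def
  set S' : Set (Fin n → K) := (fun x => f b + x) '' ((fun x => s • x) '' B) with hS'_def
  have hvs : v s ≠ ⊤ := fun h => hs ((hv.1 s).mp h)
  have hvsi : v s⁻¹ ≠ ⊤ := fun h => (inv_ne_zero hs) ((hv.1 _).mp h)
  have hsi : v s + v s⁻¹ = 0 := by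
    rw [← hv.2.1, mul_inv_cancel₀ hs, PLaux.v_one hv]
  have hsi' : v s⁻¹ + v s = 0 := by rw [add_comm]; exact hsi
  have hcan : ∀ X : WithTop Γ, v s⁻¹ + (v s + X) = X := by
    intro X; rw [← add_assoc, hsi', zero_add]
  have hcan2 : ∀ X : WithTop Γ, v s + (v s⁻¹ + X) = X := by
    intro X; rw [← add_assoc, hsi, zero_add]
  have hb_mem : b ∈ S := ⟨0, hB0, by simp⟩
  -- MapsTo
  have hmap : Set.MapsTo f S S' := by
    rintro _ ⟨w, hwB, rfl⟩
    by_cases hw0 : w = 0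
    · subst hw0
      exact ⟨s • 0, ⟨0, hB0, rfl⟩, by simp⟩
    · have hne : b + w ≠ b := fun h => hw0 (by simpa using h)
      have h1 := (hpl (b + w) ⟨w, hwB, rfl⟩ b hb_mem hne).1
      rw [add_sub_cancel_left] at h1
      set x : Fin n → K := s⁻¹ • (f (b + w) - f b) with hx_def
      have hx : minVal v x = minVal v w := by
        rw [hx_def, PLaux.mV_smul hv, h1, hcan]
      have hxB : x ∈ B := PLaux.mem_ball_of_le hv hB hB0 hwB hx.symm.le
      refine ⟨s • x, ⟨x, hxB, rfl⟩, ?_⟩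
      show f b + s • x = f (b + w)
      rw [hx_def, smul_smul, mul_inv_cancel₀ hs, one_smul, add_sub_cancel]
  -- InjOn
  have hinj : Set.InjOn f S := by
    intro y hy z hz hfe
    by_contra hne
    have h := (hpl y hy z hz hne).1
    rw [hfe, sub_self] at h
    have h0 : minVal v (y - z) ≠ ⊤ :=
      fun hh => (sub_ne_zero.mpr hne) ((PLaux.mV_top_iff hv _).mp hh)
    have h1 : v s + minVal v (y - z) ≠ ⊤ := WithTop.add_ne_top.mpr ⟨hvs, h0⟩
    exact h1 (by rw [← h, PLaux.mV_top_iff hv])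
  -- the Newton step
  have hstep : ∀ y ∈ S, ∀ z' ∈ S', f y ≠ z' →
      ∃ z ∈ S, minVal v (y - z) = v s⁻¹ + minVal v (f y - z') ∧
        minVal v (f y - z') < minVal v (f z - z') := by
    rintro _ ⟨w, hwB, rfl⟩ _ ⟨_, ⟨c, hcB, rfl⟩, rfl⟩ hne
    obtain ⟨_, ⟨x, hxB, rfl⟩, heq⟩ := hmap ⟨w, hwB, rfl⟩
    -- heq : f b + s • x = f (b + w)
    have hd : s⁻¹ • ((f b + s • c) - f (b + w)) = c - x := by
      have h1 : (f b + s • c) - (f b + s • x) = s • (c - x) := by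
        rw [smul_sub]; abel
      rw [← heq, h1, smul_smul, inv_mul_cancel₀ hs, one_smul]
    have hmemB : w + (c - x) ∈ B := by
      have h8 : min (minVal v c) (minVal v x) ≤ minVal v (c - x) :=
        PLaux.mV_min_le_sub hv c x
      have h9 : min (minVal v w) (minVal v (c - x)) ≤ minVal v (w + (c - x)) :=
        PLaux.mV_min_le_add hv w (c - x)
      rcases le_total (minVal v w) (minVal v (c - x)) with h'|h'
      · exact PLaux.mem_ball_of_le hv hB hB0 hwB (le_trans (le_min le_rfl h') h9)
      · rcases le_total (minVal v c) (minVal v x) with h''|h''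
        · have hcx : minVal v c ≤ minVal v (c - x) := le_trans (le_min le_rfl h'') h8
          exact PLaux.mem_ball_of_le hv hB hB0 hcB
            (le_trans (le_min (le_trans hcx h') hcx) h9)
        · have hxx : minVal v x ≤ minVal v (c - x) := le_trans (le_min h'' le_rfl) h8
          exact PLaux.mem_ball_of_le hv hB hB0 hxB
            (le_trans (le_min (le_trans hxx h') hxx) h9)
    refine ⟨b + (w + (c - x)), ⟨w + (c - x), hmemB, rfl⟩, ?_, ?_⟩
    · have h2 : (b + w) - (b + (w + (c - x))) = -(c - x) := by abel
      rw [h2, PLaux.mV_neg hv, ← hd, PLaux.mV_smul hv,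
        PLaux.mV_swap hv (f b + s • c) (f (b + w))]
    · have hzy : b + (w + (c - x)) ≠ b + w := by
        intro h
        apply hne
        have h3 : w + (c - x) = w := by
          have := h
          exact add_left_cancel this
        have h4 : c - x = 0 := by
          have := h3
          rwa [add_eq_left] at this
        have h5 : (f b + s • c) - f (b + w) = 0 := by
          have h6 := hd
          rw [h4] at h6
          rcases smul_eq_zero.mp h6 with h7|h7
          · exact absurd h7 (inv_ne_zero hs)
          · exact h7
        exact (sub_eq_zero.mp h5).symm
      have hp := (hpl (b + (w + (c - x))) ⟨w + (c - x), hmemB, rfl⟩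
        (b + w) ⟨w, hwB, rfl⟩ hzy).2
      have h4 : (b + (w + (c - x))) - (b + w) = c - x := by abel
      rw [h4] at hp
      have h5 : s • (c - x) = (f b + s • c) - f (b + w) := by
        rw [← hd, smul_smul, mul_inv_cancel₀ hs, one_smul]
      rw [h5] at hp
      have h6 : f (b + (w + (c - x))) - f (b + w) - ((f b + s • c) - f (b + w))
          = f (b + (w + (c - x))) - (f b + s • c) := by abel
      rw [h6] at hp
      have h7 : v s + minVal v (c - x) = minVal v (f (b + w) - (f b + s • c)) := by
        rw [← hd, PLaux.mV_smul hv, hcan2,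
          PLaux.mV_swap hv (f b + s • c) (f (b + w))]
      rwa [h7] at hp
  -- ImmediateOn
  have himm : ImmediateOn (fun x y : Fin n → K => minVal v (x - y))
      (fun x y : Fin n → K => minVal v (x - y)) f S S' := by
    intro z' hz' y hy hne
    obtain ⟨z, hzS, h1, h2⟩ := hstep y hy z' hz' hne
    refine ⟨z, hzS, h2, ?_⟩
    rintro _ ⟨t, ⟨htS, htle⟩, rfl⟩
    refine ⟨hmap htS, ?_⟩
    show minVal v (f y - z') ≤ minVal v (f y - f t)
    by_cases hty : t = y
    · subst hty
      rw [sub_self, (PLaux.mV_top_iff hv (0 : Fin n → K)).mpr rfl]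
      exact le_top
    · have h3 := (hpl y hy t htS (fun h => hty h.symm)).1
      rw [h3]
      calc minVal v (f y - z') = v s + (v s⁻¹ + minVal v (f y - z')) := (hcan2 _).symm
        _ = v s + minVal v (y - z) := by rw [h1]
        _ ≤ v s + minVal v (y - t) := add_le_add_right htle _
  refine ⟨hmap, himm, hinj, ?_⟩
  -- surjectivity under spherical completeness
  intro hsc
  refine ⟨hmap, hinj, ?_⟩
  intro z' hz'
  by_contra hno'
  have hno : ∀ y ∈ S, f y ≠ z' := fun y hy h => hno' ⟨y, hy, h⟩
  set r : (Fin n → K) → WithTop Γ := fun y => v s⁻¹ + minVal v (f y - z') with hr_def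
  have key : ∀ y ∈ S, ∀ t ∈ S, minVal v (f y - z') ≤ minVal v (f t - z') →
      r y ≤ minVal v (y - t) := by
    intro y hy t ht hle
    by_cases hty : t = y
    · subst hty
      rw [sub_self, (PLaux.mV_top_iff hv (0 : Fin n → K)).mpr rfl]
      exact le_top
    · have h1 := (hpl y hy t ht (fun h => hty h.symm)).1
      have h2 : minVal v (f y - z') ≤ minVal v (f y - f t) := by
        have h3 := PLaux.mV_min_le_sub hv (f y - z') (f t - z')
        rw [sub_sub_sub_cancel_right] at h3
        exact le_trans (le_min le_rfl hle) h3
      rw [h1] at h2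
      calc r y ≤ v s⁻¹ + (v s + minVal v (y - t)) := add_le_add_right h2 _
        _ = minVal v (y - t) := hcan _
  have hmono_r : ∀ y t, minVal v (f y - z') ≤ minVal v (f t - z') → r y ≤ r t :=
    fun y t h => add_le_add_right h _
  set Ni : Fin n → Set (Set K) :=
    fun i => {D | ∃ y ∈ S, D = {a : K | r y ≤ v (y i - a)}} with hNi_def
  have hNi_ball : ∀ i, ∀ D ∈ Ni i, IsBall (fun a c : K => v (a - c)) D := by
    rintro i D ⟨y, hy, rfl⟩
    refine ⟨{(r y, y i)}, Set.singleton_nonempty _, ⟨y i, ?_⟩, ?_⟩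
    · rintro p hp
      rw [Set.mem_singleton_iff] at hp
      subst hp
      show r y ≤ v (y i - y i)
      rw [sub_self, (hv.1 0).mpr rfl]
      exact le_top
    · ext a
      simp [closedBall]
  have hNi_chain : ∀ i, IsChain (· ⊆ ·) (Ni i) := by
    rintro i D ⟨y, hy, rfl⟩ D' ⟨t, ht, rfl⟩ -
    have main : ∀ y' ∈ S, ∀ t' ∈ S,
        minVal v (f y' - z') ≤ minVal v (f t' - z') →
        {a : K | r t' ≤ v (t' i - a)} ⊆ {a : K | r y' ≤ v (y' i - a)} := by
      intro y' hy' t' ht' hle a ha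
      have h1 : r y' ≤ minVal v (y' - t') := key y' hy' t' ht' hle
      have h2 : minVal v (y' - t') ≤ v (y' i - t' i) := PLaux.mV_le_coord (y' - t') i
      have h3 : r y' ≤ v (t' i - a) := le_trans (hmono_r y' t' hle) ha
      have h4 := PLaux.v_min_le_add hv (y' i - t' i) (t' i - a)
      rw [sub_add_sub_cancel] at h4
      exact le_trans (le_min (le_trans h1 h2) h3) h4
    rcases le_total (minVal v (f y - z')) (minVal v (f t - z')) with hle|hle
    · exact Or.inr (main y hy t ht hle)
    · exact Or.inl (main t ht y hy hle)
  have hinter : ∀ i : Fin n, ∃ a : K, ∀ D ∈ Ni i, a ∈ D := by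
    intro i
    obtain ⟨a, ha⟩ := hsc (Ni i) ⟨_, ⟨b, hb_mem, rfl⟩⟩ (hNi_ball i) (hNi_chain i)
    exact ⟨a, fun D hD => ha D hD⟩
  choose a ha using hinter
  have hglob : ∀ y ∈ S, r y ≤ minVal v (y - a) := by
    intro y hy
    apply Finset.le_inf
    intro i _
    have h := ha i _ ⟨y, hy, rfl⟩
    exact h
  have haS : a ∈ S := by
    obtain ⟨_, ⟨c, hcB, rfl⟩, hzz⟩ := hz'
    have h1 := hglob b hb_mem
    have h2 : r b = minVal v c := by
      rw [hr_def]
      show v s⁻¹ + minVal v (f b - z') = minVal v c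
      rw [← hzz]
      have h3 : f b - (f b + s • c) = -(s • c) := by abel
      rw [h3, PLaux.mV_neg hv, PLaux.mV_smul hv, hcan]
    rw [h2] at h1
    rw [PLaux.mV_swap hv] at h1
    exact ⟨a - b, PLaux.mem_ball_of_le hv hB hB0 hcB h1, by show b + (a - b) = a; abel⟩
  obtain ⟨z, hzS, hzeq, hzlt⟩ := hstep a haS z' hz' (hno a haS)
  have h1 := hglob z hzS
  have h2 : minVal v (z - a) = r a := by
    rw [PLaux.mV_swap hv, hzeq]
  rw [h2] at h1
  have h3 : r a < r z := (WithTop.add_lt_add_iff_left hvsi).mpr hzlt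
  exact absurd (lt_of_le_of_lt h1 h3) (lt_irrefl _)
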